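/- Let T and X be A-bounded operators on H admitting A-adjoints Ts and Xs (i.e. A∘Ts = T*∘A and A∘Xs = X*∘A). Then max{w_A(T+X), w_A(T−X)} ≤ √(w_A(X)² + w_A(X∘T) + w_A(T)² + (1/2)·‖X∘Xs + Ts∘T‖_A). -/

import Mathlib

noncomputable def sInner {E : Type*} [NormedAddCommGroup E] [InnerProductSpace ℂ E]
    (A : E →L[ℂ] E) (x y : E) : ℂ := inner ℂ (A x) y

noncomputable def sNorm {E : Type*} [NormedAddCommGroup E] [InnerProductSpace ℂ E]
    (A : E →L[ℂ] E) (x : E) : ℝ := Real.sqrt (sInner A x x).re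

/-- The `A`-operator seminorm. -/
noncomputable def opSNorm {E : Type*} [NormedAddCommGroup E] [InnerProductSpace ℂ E]
    (A T : E →L[ℂ] E) : ℝ := sSup {c | ∃ x : E, sNorm A x = 1 ∧ c = sNorm A (T x)}

/-- The `A`-numerical radius. -/
noncomputable def numRad {E : Type*} [NormedAddCommGroup E] [InnerProductSpace ℂ E]
    (A T : E →L[ℂ] E) : ℝ := sSup {c | ∃ x : E, sNorm A x = 1 ∧ c = ‖sInner A (T x) x‖}

/-- `T` is `A`-bounded. -/
def ABounded {E : Type*} [NormedAddCommGroup E] [InnerProductSpace ℂ E]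
    (A T : E →L[ℂ] E) : Prop := ∃ c > 0, ∀ x : E, sNorm A (T x) ≤ c * sNorm A x

/-- The 2×2 block operator `[[T, X], [Y, S]]` on `H ⊕ H` (with the ℓ² product structure). -/
noncomputable def blk {H : Type*} [NormedAddCommGroup H] [InnerProductSpace ℂ H]
    (T X Y S : H →L[ℂ] H) : WithLp 2 (H × H) →L[ℂ] WithLp 2 (H × H) :=
  ((WithLp.prodContinuousLinearEquiv 2 ℂ H H).symm.toContinuousLinearMap.comp
    (((T.coprod X).prod (Y.coprod S)).comp
      (WithLp.prodContinuousLinearEquiv 2 ℂ H H).toContinuousLinearMap))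

/-- The diagonal operator `𝔸 = diag(A, A)` on `H ⊕ H`. -/
noncomputable def twoA {H : Type*} [NormedAddCommGroup H] [InnerProductSpace ℂ H]
    (A : H →L[ℂ] H) : WithLp 2 (H × H) →L[ℂ] WithLp 2 (H × H) := blk A 0 0 A

section Aux

variable {H : Type*} [NormedAddCommGroup H] [InnerProductSpace ℂ H] [CompleteSpace H]

lemma sNorm_nonneg' (A : H →L[ℂ] H) (x : H) : 0 ≤ sNorm A x := Real.sqrt_nonneg _

lemma sInner_re_nonneg' {A : H →L[ℂ] H} (hA : A.IsPositive) (x : H) :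
    0 ≤ (sInner A x x).re := by
  simpa [sInner] using (Complex.le_def.mp (hA.inner_nonneg_left x)).1

lemma sNorm_sq' {A : H →L[ℂ] H} (hA : A.IsPositive) (x : H) :
    sNorm A x ^ 2 = (sInner A x x).re := Real.sq_sqrt (sInner_re_nonneg' hA x)

lemma cre_le_norm (z : ℂ) : z.re ≤ ‖z‖ := by
  exact Complex.re_le_norm z

lemma sInner_A_swap {A : H →L[ℂ] H} (hA : A.IsPositive) (u v : H) :
    (inner ℂ (A u) v : ℂ) = inner ℂ u (A v) := by
  conv_lhs => rw [← hA.isSelfAdjoint.adjoint_eq]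
  exact ContinuousLinearMap.adjoint_inner_left A v u

lemma sInner_conj' {A : H →L[ℂ] H} (hA : A.IsPositive) (x y : H) :
    (starRingEnd ℂ) (sInner A x y) = sInner A y x := by
  unfold sInner
  calc (starRingEnd ℂ) (inner ℂ (A x) y : ℂ) = inner ℂ y (A x) := inner_conj_symm _ _
    _ = inner ℂ (A y) x := (sInner_A_swap hA y x).symm

/-- The pre-inner-product core given by a positive operator. -/
noncomputable def aCore (A : H →L[ℂ] H) (hA : A.IsPositive) :
    PreInnerProductSpace.Core ℂ H where
  inner := sInner A
  conj_inner_symm x y := sInner_conj' hA y x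
  re_inner_nonneg x := by simpa using sInner_re_nonneg' hA x
  add_left x y z := by simp [sInner, inner_add_left]
  smul_left x y r := by simp [sInner, inner_smul_left]; ring

lemma sInner_cs {A : H →L[ℂ] H} (hA : A.IsPositive) (x y : H) :
    ‖sInner A x y‖ ≤ sNorm A x * sNorm A y := by
  have h : ‖sInner A x y‖ * ‖sInner A y x‖ ≤ (sInner A x x).re * (sInner A y y).re := by
    exact @InnerProductSpace.Core.inner_mul_inner_self_le ℂ H _ _ _ (aCore A hA) x y
  have hyx : ‖sInner A y x‖ = ‖sInner A x y‖ := by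
    rw [← sInner_conj' hA x y]; exact RCLike.norm_conj _
  rw [hyx, ← sNorm_sq' hA, ← sNorm_sq' hA] at h
  have hx := sNorm_nonneg' A x
  have hy := sNorm_nonneg' A y
  nlinarith [norm_nonneg (sInner A x y), mul_nonneg hx hy]

lemma sNorm_add_le' {A : H →L[ℂ] H} (hA : A.IsPositive) (x y : H) :
    sNorm A (x + y) ≤ sNorm A x + sNorm A y := by
  have h1 : sInner A (x + y) (x + y)
      = sInner A x x + sInner A x y + sInner A y x + sInner A y y := by
    simp [sInner, inner_add_left, inner_add_right]; ring
  have h2 : (sInner A y x).re = (sInner A x y).re := by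
    rw [← sInner_conj' hA x y]; exact Complex.conj_re _
  have hexp : (sInner A (x + y) (x + y)).re
      = (sInner A x x).re + 2 * (sInner A x y).re + (sInner A y y).re := by
    rw [h1]; simp [Complex.add_re]; linarith
  have hre : (sInner A x y).re ≤ sNorm A x * sNorm A y :=
    le_trans (cre_le_norm _) (sInner_cs hA x y)
  have hx := sNorm_nonneg' A x
  have hy := sNorm_nonneg' A y
  calc sNorm A (x + y) = Real.sqrt ((sInner A (x + y) (x + y)).re) := rfl
    _ ≤ Real.sqrt ((sNorm A x + sNorm A y) ^ 2) := by
        apply Real.sqrt_le_sqrt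
        rw [hexp]
        nlinarith [sNorm_sq' hA x, sNorm_sq' hA y]
    _ = sNorm A x + sNorm A y := Real.sqrt_sq (by positivity)

lemma buzano' {A : H →L[ℂ] H} (hA : A.IsPositive) {e : H} (he : sNorm A e = 1) (a b : H) :
    2 * ‖sInner A a e * sInner A e b‖ ≤ sNorm A a * sNorm A b + ‖sInner A a b‖ := by
  have hee : sInner A e e = 1 := by
    have hre : (sInner A e e).re = 1 := by
      have h := sNorm_sq' hA e
      rw [he] at h; simpa using h.symm
    have him : (sInner A e e).im = 0 := by
      have h := sInner_conj' hA e e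
      have h2 : -(sInner A e e).im = (sInner A e e).im := by
        simpa using congrArg Complex.im h
      linarith
    exact Complex.ext (by simp [hre]) (by simp [him])
  set c : ℂ := sInner A e a with hc
  have hca : sInner A a e = (starRingEnd ℂ) c := (sInner_conj' hA e a).symm
  have expand : sInner A (a - (2 * c) • e) (a - (2 * c) • e)
      = sInner A a a - (2 * c) * sInner A a e - (starRingEnd ℂ) (2 * c) * sInner A e a
        + (starRingEnd ℂ) (2 * c) * (2 * c) * sInner A e e := by
    simp [sInner, inner_sub_left, inner_sub_right, inner_smul_left, inner_smul_right,
      map_sub, map_smul, map_ofNat]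
    ring
  have hrefl : sInner A (a - (2 * c) • e) (a - (2 * c) • e) = sInner A a a := by
    have hc2 : (starRingEnd ℂ) (2 : ℂ) = 2 := by
      rw [show (2 : ℂ) = ((2 : ℝ) : ℂ) by norm_num, Complex.conj_ofReal]
    rw [expand, hee, hca, ← hc]
    simp only [map_mul, hc2]
    ring
  have hnorm : sNorm A (a - (2 * c) • e) = sNorm A a := by
    unfold sNorm; rw [hrefl]
  have hcs := sInner_cs hA (a - (2 * c) • e) b
  rw [hnorm] at hcs
  have hexp2 : sInner A (a - (2 * c) • e) b
      = sInner A a b - (starRingEnd ℂ) (2 * c) * sInner A e b := by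
    simp [sInner, inner_sub_left, inner_smul_left, map_sub, map_smul, map_ofNat]; ring
  rw [hexp2] at hcs
  calc 2 * ‖sInner A a e * sInner A e b‖
      = ‖(sInner A a b - (starRingEnd ℂ) (2 * c) * sInner A e b) - sInner A a b‖ := by
        rw [hca]
        have hc2 : (starRingEnd ℂ) (2 : ℂ) = 2 := by
          rw [show (2 : ℂ) = ((2 : ℝ) : ℂ) by norm_num, Complex.conj_ofReal]
        have h2 : (starRingEnd ℂ) (2 * c) = 2 * (starRingEnd ℂ) c := by
          rw [map_mul, hc2]
        rw [h2]
        rw [show sInner A a b - 2 * (starRingEnd ℂ) c * sInner A e b - sInner A a b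
          = -((2:ℂ) * ((starRingEnd ℂ) c * sInner A e b)) by ring]
        rw [norm_neg, norm_mul, norm_mul]
        simp
    _ ≤ ‖sInner A a b - (starRingEnd ℂ) (2 * c) * sInner A e b‖ + ‖sInner A a b‖ :=
        norm_sub_le _ _
    _ ≤ sNorm A a * sNorm A b + ‖sInner A a b‖ := add_le_add_left hcs _

lemma key_adj {A X Xs : H →L[ℂ] H} (hA : A.IsPositive)
    (hXs : A.comp Xs = (ContinuousLinearMap.adjoint X).comp A) (u y : H) :
    sInner A u (Xs y) = sInner A (X u) y := by
  have h : A (Xs y) = (ContinuousLinearMap.adjoint X) (A y) := by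
    have := ContinuousLinearMap.ext_iff.mp hXs y
    simpa using this
  unfold sInner
  calc (inner ℂ (A u) (Xs y) : ℂ) = inner ℂ u (A (Xs y)) := sInner_A_swap hA u (Xs y)
    _ = inner ℂ u ((ContinuousLinearMap.adjoint X) (A y)) := by rw [h]
    _ = inner ℂ (X u) (A y) := ContinuousLinearMap.adjoint_inner_right X u (A y)
    _ = inner ℂ (A (X u)) y := (sInner_A_swap hA (X u) y).symm

lemma key_adj' {A T Ts : H →L[ℂ] H}
    (hTs : A.comp Ts = (ContinuousLinearMap.adjoint T).comp A) (w x : H) :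
    sInner A (Ts w) x = sInner A w (T x) := by
  have h : A (Ts w) = (ContinuousLinearMap.adjoint T) (A w) := by
    have := ContinuousLinearMap.ext_iff.mp hTs w
    simpa using this
  unfold sInner
  rw [h]
  exact ContinuousLinearMap.adjoint_inner_left T x (A w)

lemma adj_bounded {A X Xs : H →L[ℂ] H} (hA : A.IsPositive)
    (hXs : A.comp Xs = (ContinuousLinearMap.adjoint X).comp A) {c : ℝ} (hc : 0 < c)
    (hXb : ∀ x, sNorm A (X x) ≤ c * sNorm A x) (y : H) :
    sNorm A (Xs y) ≤ c * sNorm A y := by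
  have h1 : sNorm A (Xs y) ^ 2 = (sInner A (X (Xs y)) y).re := by
    rw [sNorm_sq' hA, ← key_adj hA hXs]
  have h2 : (sInner A (X (Xs y)) y).re ≤ ‖sInner A (X (Xs y)) y‖ := cre_le_norm _
  have h3 := sInner_cs hA (X (Xs y)) y
  have h4 := hXb (Xs y)
  have h5 : sNorm A (Xs y) ^ 2 ≤ c * sNorm A (Xs y) * sNorm A y := by
    calc sNorm A (Xs y) ^ 2 ≤ sNorm A (X (Xs y)) * sNorm A y := by
          rw [h1]; exact le_trans h2 h3
      _ ≤ c * sNorm A (Xs y) * sNorm A y :=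
          mul_le_mul_of_nonneg_right h4 (sNorm_nonneg' A y)
  rcases eq_or_lt_of_le (sNorm_nonneg' A (Xs y)) with h0 | h0
  · rw [← h0]
    exact mul_nonneg hc.le (sNorm_nonneg' A y)
  · refine le_of_mul_le_mul_right ?_ h0
    nlinarith [h5]

lemma numRad_bound_of {A : H →L[ℂ] H} (hA : A.IsPositive) {S : H →L[ℂ] H} {c : ℝ}
    (hb : ∀ y, sNorm A (S y) ≤ c * sNorm A y) {x : H} (hx : sNorm A x = 1) :
    ‖sInner A (S x) x‖ ≤ numRad A S := by
  apply le_csSup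
  · refine ⟨c, ?_⟩
    rintro r ⟨y, hy, rfl⟩
    calc ‖sInner A (S y) y‖ ≤ sNorm A (S y) * sNorm A y := sInner_cs hA _ _
      _ ≤ c * sNorm A y * sNorm A y :=
          mul_le_mul_of_nonneg_right (hb y) (sNorm_nonneg' A y)
      _ = c := by rw [hy]; ring
  · exact ⟨x, hx, rfl⟩

lemma opS_bound_of {A : H →L[ℂ] H} {S : H →L[ℂ] H} {c : ℝ}
    (hb : ∀ y, sNorm A (S y) ≤ c * sNorm A y) {x : H} (hx : sNorm A x = 1) :
    sNorm A (S x) ≤ opSNorm A S := by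
  apply le_csSup
  · refine ⟨c, ?_⟩
    rintro r ⟨y, hy, rfl⟩
    have := hb y
    rwa [hy, mul_one] at this
  · exact ⟨x, hx, rfl⟩

lemma pointwise_bound {A : H →L[ℂ] H} (hA : A.IsPositive)
    {T X Ts Xs : H →L[ℂ] H} (hT : ABounded A T) (hX : ABounded A X)
    (hTs : A.comp Ts = (ContinuousLinearMap.adjoint T).comp A)
    (hXs : A.comp Xs = (ContinuousLinearMap.adjoint X).comp A)
    {x : H} (hx : sNorm A x = 1) :
    ‖sInner A (T x) x‖ + ‖sInner A (X x) x‖ ≤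
      Real.sqrt ((numRad A X) ^ 2 + numRad A (X.comp T) + (numRad A T) ^ 2 +
        (1 / 2) * opSNorm A (X.comp Xs + Ts.comp T)) := by
  obtain ⟨cT, hcT, hTb⟩ := hT
  obtain ⟨cX, hcX, hXb⟩ := hX
  set p := ‖sInner A (T x) x‖ with hp_def
  set q := ‖sInner A (X x) x‖ with hq_def
  have hp : p ≤ numRad A T := numRad_bound_of hA hTb hx
  have hq : q ≤ numRad A X := numRad_bound_of hA hXb hx
  have hXTb : ∀ y, sNorm A ((X.comp T) y) ≤ (cX * cT) * sNorm A y := by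
    intro y
    calc sNorm A (X (T y)) ≤ cX * sNorm A (T y) := hXb _
      _ ≤ cX * (cT * sNorm A y) := mul_le_mul_of_nonneg_left (hTb y) hcX.le
      _ = (cX * cT) * sNorm A y := by ring
  have hXT : ‖sInner A ((X.comp T) x) x‖ ≤ numRad A (X.comp T) :=
    numRad_bound_of hA hXTb hx
  have hXsb : ∀ y, sNorm A (Xs y) ≤ cX * sNorm A y := adj_bounded hA hXs hcX hXb
  have hTsb : ∀ y, sNorm A (Ts y) ≤ cT * sNorm A y := adj_bounded hA hTs hcT hTb
  have hSb : ∀ y, sNorm A ((X.comp Xs + Ts.comp T) y) ≤ (cX * cX + cT * cT) * sNorm A y := by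
    intro y
    have h1 : (X.comp Xs + Ts.comp T) y = X (Xs y) + Ts (T y) := rfl
    rw [h1]
    calc sNorm A (X (Xs y) + Ts (T y)) ≤ sNorm A (X (Xs y)) + sNorm A (Ts (T y)) :=
          sNorm_add_le' hA _ _
      _ ≤ cX * (cX * sNorm A y) + cT * (cT * sNorm A y) := by
          refine add_le_add ?_ ?_
          · exact le_trans (hXb _) (mul_le_mul_of_nonneg_left (hXsb y) hcX.le)
          · exact le_trans (hTsb _) (mul_le_mul_of_nonneg_left (hTb y) hcT.le)
      _ = (cX * cX + cT * cT) * sNorm A y := by ring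
  have hbuz := buzano' hA hx (T x) (Xs x)
  have he1 : sInner A x (Xs x) = sInner A (X x) x := key_adj hA hXs x x
  have he2 : sInner A (T x) (Xs x) = sInner A ((X.comp T) x) x := key_adj hA hXs (T x) x
  rw [he1, he2, norm_mul] at hbuz
  have hsum : sNorm A (T x) ^ 2 + sNorm A (Xs x) ^ 2
      = (sInner A ((X.comp Xs + Ts.comp T) x) x).re := by
    have e1 : sInner A (Ts (T x)) x = sInner A (T x) (T x) := key_adj' hTs (T x) x
    have e2 : sInner A (Xs x) (Xs x) = sInner A (X (Xs x)) x := key_adj hA hXs (Xs x) x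
    have e3 : sInner A ((X.comp Xs + Ts.comp T) x) x
        = sInner A (X (Xs x)) x + sInner A (Ts (T x)) x := by
      have h : (X.comp Xs + Ts.comp T) x = X (Xs x) + Ts (T x) := rfl
      rw [h]; simp [sInner, inner_add_left]
    rw [sNorm_sq' hA, sNorm_sq' hA, e2, e3, ← e1, Complex.add_re]
    ring
  have hSx : sNorm A ((X.comp Xs + Ts.comp T) x) ≤ opSNorm A (X.comp Xs + Ts.comp T) :=
    opS_bound_of hSb hx
  have hS : (sInner A ((X.comp Xs + Ts.comp T) x) x).re
      ≤ opSNorm A (X.comp Xs + Ts.comp T) := by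
    calc (sInner A ((X.comp Xs + Ts.comp T) x) x).re
        ≤ ‖sInner A ((X.comp Xs + Ts.comp T) x) x‖ := cre_le_norm _
      _ ≤ sNorm A ((X.comp Xs + Ts.comp T) x) * sNorm A x := sInner_cs hA _ _
      _ = sNorm A ((X.comp Xs + Ts.comp T) x) := by rw [hx, mul_one]
      _ ≤ opSNorm A (X.comp Xs + Ts.comp T) := hSx
  have hab : sNorm A (T x) * sNorm A (Xs x)
      ≤ (1 / 2) * (sInner A ((X.comp Xs + Ts.comp T) x) x).re := by
    nlinarith [sq_nonneg (sNorm A (T x) - sNorm A (Xs x)), hsum]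
  have h2pq : 2 * (p * q) ≤ numRad A (X.comp T) +
      (1 / 2) * opSNorm A (X.comp Xs + Ts.comp T) := by
    calc 2 * (p * q) ≤ sNorm A (T x) * sNorm A (Xs x) + ‖sInner A ((X.comp T) x) x‖ :=
          hbuz
      _ ≤ (1 / 2) * (sInner A ((X.comp Xs + Ts.comp T) x) x).re + numRad A (X.comp T) :=
          add_le_add hab hXT
      _ ≤ (1 / 2) * opSNorm A (X.comp Xs + Ts.comp T) + numRad A (X.comp T) := by
          have := hS; linarith
      _ = numRad A (X.comp T) + (1 / 2) * opSNorm A (X.comp Xs + Ts.comp T) := by ring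
  have hXTnn : 0 ≤ numRad A (X.comp T) := le_trans (norm_nonneg _) hXT
  have hopSnn : 0 ≤ opSNorm A (X.comp Xs + Ts.comp T) :=
    le_trans (sNorm_nonneg' A _) hSx
  have hpnn : 0 ≤ p := norm_nonneg _
  have hqnn : 0 ≤ q := norm_nonneg _
  rw [Real.le_sqrt (by positivity) (by positivity)]
  have hp2 : p ^ 2 ≤ numRad A T ^ 2 := pow_le_pow_left₀ hpnn hp 2
  have hq2 : q ^ 2 ≤ numRad A X ^ 2 := pow_le_pow_left₀ hqnn hq 2
  nlinarith [hp2, hq2, h2pq]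

end Aux

theorem stmt13 {H : Type*} [NormedAddCommGroup H] [InnerProductSpace ℂ H] [CompleteSpace H]
    (A : H →L[ℂ] H) (hA : A.IsPositive)
    (T X Ts Xs : H →L[ℂ] H) (hT : ABounded A T) (hX : ABounded A X)
    (hTs : A.comp Ts = (ContinuousLinearMap.adjoint T).comp A)
    (hXs : A.comp Xs = (ContinuousLinearMap.adjoint X).comp A) :
    max (numRad A (T + X)) (numRad A (T - X)) ≤
      Real.sqrt ((numRad A X) ^ 2 + numRad A (X.comp T) + (numRad A T) ^ 2 +
        (1 / 2) * opSNorm A (X.comp Xs + Ts.comp T)) := by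
  apply max_le
  · apply Real.sSup_le _ (Real.sqrt_nonneg _)
    rintro r ⟨x, hx, rfl⟩
    have hsplit : sInner A ((T + X) x) x = sInner A (T x) x + sInner A (X x) x := by
      have h : (T + X) x = T x + X x := rfl
      rw [h]; simp [sInner, inner_add_left]
    calc ‖sInner A ((T + X) x) x‖ ≤ ‖sInner A (T x) x‖ + ‖sInner A (X x) x‖ := by
          rw [hsplit]; exact norm_add_le _ _
      _ ≤ _ := pointwise_bound hA hT hX hTs hXs hx
  · apply Real.sSup_le _ (Real.sqrt_nonneg _)
    rintro r ⟨x, hx, rfl⟩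
    have hsplit : sInner A ((T - X) x) x = sInner A (T x) x - sInner A (X x) x := by
      have h : (T - X) x = T x - X x := rfl
      rw [h]; simp [sInner, inner_sub_left]
    calc ‖sInner A ((T - X) x) x‖ ≤ ‖sInner A (T x) x‖ + ‖sInner A (X x) x‖ := by
          rw [hsplit]; exact norm_sub_le _ _
      _ ≤ _ := pointwise_bound hA hT hX hTs hXs hx
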